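/- Let p ≥ 3 be an odd prime. There exists a simple module V over the group algebra 𝔽₂[SL₂(𝔽_p)] such that dim_{𝔽₂}(V) ≤ p, the first group cohomology H¹(SL₂(𝔽_p), V) is nonzero, and the centre of SL₂(𝔽_p) acts trivially on V. -/

import Mathlib

open Module Projectivization

section Geom

variable (p : ℕ) [Fact (p.Prime)]

local notation "G" => Matrix.SpecialLinearGroup (Fin 2) (ZMod p)
local notation "X" => Projectivization (ZMod p) (Fin 2 → ZMod p)

noncomputable instance slAction : MulAction G X where
  smul g x := Projectivization.map (Matrix.SpecialLinearGroup.toLin' g).toLinearMap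
    (Matrix.SpecialLinearGroup.toLin' g).injective x
  one_smul x := by
    induction x using Projectivization.ind with
    | h v hv =>
      show Projectivization.map _ _ _ = _
      rw [Projectivization.map_mk]
      simp
  mul_smul g h x := by
    induction x using Projectivization.ind with
    | h v hv =>
      show Projectivization.map _ _ _ =
        Projectivization.map _ _ (Projectivization.map _ _ _)
      rw [Projectivization.map_mk, Projectivization.map_mk, Projectivization.map_mk]
      simp

theorem smul_mk (g : G) (v : Fin 2 → ZMod p) (hv : v ≠ 0) :
    g • (mk (ZMod p) v hv) = mk (ZMod p) (Matrix.SpecialLinearGroup.toLin' g v)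
      (by simpa using (Matrix.SpecialLinearGroup.toLin' g).map_ne_zero_iff.mpr hv) := by
  show Projectivization.map _ _ _ = _
  rw [Projectivization.map_mk]
  rfl

theorem vec_ne_zero (a : ZMod p) : ![a, (1 : ZMod p)] ≠ 0 := by
  intro h
  have := congrFun h 1
  simp at this

theorem e0_ne_zero : ![(1 : ZMod p), 0] ≠ 0 := by
  intro h
  have := congrFun h 0
  simp at this

noncomputable def optEquiv : Option (ZMod p) ≃ X :=
  Equiv.ofBijective
    (fun o => o.elim (mk (ZMod p) ![1, 0] (e0_ne_zero p)) (fun a => mk (ZMod p) ![a, 1] (vec_ne_zero p a)))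
    (by
      constructor
      · intro o₁ o₂ h
        match o₁, o₂ with
        | none, none => rfl
        | none, some b =>
          exfalso
          simp only [Option.elim] at h
          rw [mk_eq_mk_iff'] at h
          obtain ⟨a, ha⟩ := h
          have h1 := congrFun ha 1
          simp at h1
          have h0 := congrFun ha 0
          rw [h1] at h0
          simp at h0
        | some a, none =>
          exfalso
          simp only [Option.elim] at h
          rw [mk_eq_mk_iff'] at h
          obtain ⟨c, hc⟩ := h
          have := congrFun hc 1
          simp at this
        | some a, some b =>
          simp only [Option.elim] at h
          rw [mk_eq_mk_iff'] at h
          obtain ⟨c, hc⟩ := h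
          have h1 := congrFun hc 1
          have h0 := congrFun hc 0
          simp at h1 h0
          rw [h1, one_mul] at h0
          rw [h0]
      · intro x
        induction x using Projectivization.ind with
        | h v hv =>
          by_cases h1 : v 1 = 0
          · refine ⟨none, ?_⟩
            have h0 : v 0 ≠ 0 := by
              intro h0
              apply hv
              funext i
              fin_cases i <;> simp [h0, h1]
            simp only [Option.elim]
            rw [mk_eq_mk_iff']
            refine ⟨(v 0)⁻¹, ?_⟩
            funext i
            fin_cases i <;> simp [h1]
            field_simp
          · refine ⟨some (v 0 / v 1), ?_⟩
            simp only [Option.elim]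
            rw [mk_eq_mk_iff']
            refine ⟨(v 1)⁻¹, ?_⟩
            funext i
            fin_cases i <;> simp [div_eq_mul_inv]
            · ring
            · field_simp)

noncomputable instance : Fintype X := Fintype.ofEquiv _ (optEquiv p)

theorem cardX : Fintype.card X = p + 1 := by
  rw [← Fintype.card_congr (optEquiv p)]
  simp [ZMod.card p]

theorem transitive_smul (x : X) :
    ∃ g : G, g • (mk (ZMod p) ![1, 0] (e0_ne_zero p)) = x := by
  induction x using Projectivization.ind with
  | h v hv =>
    by_cases h0 : v 0 ≠ 0
    · refine ⟨⟨!![v 0, 0; v 1, (v 0)⁻¹], by simp [Matrix.det_fin_two_of, h0]⟩, ?_⟩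
      refine (_root_.smul_mk p _ _ _).trans ?_
      congr 1
      funext i
      erw [Matrix.SpecialLinearGroup.toLin'_apply, Matrix.toLin'_apply]
      fin_cases i <;> simp [Matrix.mulVec, dotProduct]
    · push_neg at h0
      have h1 : v 1 ≠ 0 := by
        intro h1
        apply hv
        funext i
        fin_cases i <;> simp [h0, h1]
      refine ⟨⟨!![v 0, -(v 1)⁻¹; v 1, 0], by simp [Matrix.det_fin_two_of, h1]⟩, ?_⟩
      refine (_root_.smul_mk p _ _ _).trans ?_
      congr 1
      funext i
      erw [Matrix.SpecialLinearGroup.toLin'_apply, Matrix.toLin'_apply]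
      fin_cases i <;> simp [Matrix.mulVec, dotProduct]

theorem center_smul (z : G) (hz : z ∈ Subgroup.center G) (x : X) : z • x = x := by
  obtain ⟨r, hr2, hrz⟩ := Matrix.SpecialLinearGroup.mem_center_iff.mp hz
  induction x using Projectivization.ind with
  | h v hv =>
    rw [smul_mk, mk_eq_mk_iff']
    refine ⟨r, ?_⟩
    rw [Matrix.SpecialLinearGroup.toLin'_apply, Matrix.toLin'_apply, ← hrz]
    show r • v = Matrix.mulVec (Matrix.scalar (Fin 2) r) v
    rw [Matrix.scalar_apply, ← Matrix.smul_one_eq_diagonal, Matrix.smul_mulVec,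
      Matrix.one_mulVec]

end Geom

open Module

theorem aux_main {G : Type} [Group G] (p : ℕ) :
    ∀ n : ℕ, ∀ (V : Type) [AddCommGroup V] [Module (ZMod 2) V]
      [FiniteDimensional (ZMod 2) V],
      finrank (ZMod 2) V = n → n ≤ p →
      ∀ (ρ : Representation (ZMod 2) G V) (f : G → V),
      (∀ g h, f (g * h) = f g + ρ g (f h)) →
      (¬ ∃ v : V, ∀ g, f g = ρ g v - v) →
      (∀ z ∈ Subgroup.center G, ∀ v : V, ρ z v = v) →
      ∃ (d : ℕ) (ρ' : Representation (ZMod 2) G (Fin d → ZMod 2)),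
        1 ≤ d ∧ d ≤ p ∧
        (∀ W : Submodule (ZMod 2) (Fin d → ZMod 2),
          (∀ g : G, ∀ v ∈ W, ρ' g v ∈ W) → W = ⊥ ∨ W = ⊤) ∧
        (∃ f' : G → (Fin d → ZMod 2),
          (∀ g h, f' (g * h) = f' g + ρ' g (f' h)) ∧
          ¬ ∃ v : Fin d → ZMod 2, ∀ g, f' g = ρ' g v - v) ∧
        (∀ z ∈ Subgroup.center G, ∀ v : Fin d → ZMod 2, ρ' z v = v) := by
  intro n
  induction n using Nat.strong_induction_on with
  | _ n ih =>
    intro V _ _ _ hrank hnp ρ f hcoc hncb hcen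
    by_cases hsimp : ∀ W : Submodule (ZMod 2) V, (∀ g : G, ∀ v ∈ W, ρ g v ∈ W) → W = ⊥ ∨ W = ⊤
    · -- V itself is simple; transport along a basis
      set d := finrank (ZMod 2) V with hd
      have hd1 : 1 ≤ d := by
        rcases Nat.eq_zero_or_pos d with h0 | h1
        · exfalso
          have : Subsingleton V := (finrank_zero_iff (R := ZMod 2)).mp h0
          exact hncb ⟨0, fun g => Subsingleton.elim _ _⟩
        · exact h1
      let e : V ≃ₗ[ZMod 2] (Fin d → ZMod 2) := (Module.finBasis (ZMod 2) V).equivFun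
      refine ⟨d, ⟨⟨fun g => e.toLinearMap ∘ₗ ρ g ∘ₗ e.symm.toLinearMap, ?_⟩, ?_⟩, hd1,
        hrank ▸ hnp, ?_, ?_, ?_⟩
      · ext v; simp
      · intro g h; ext v; simp
      · intro W hW
        have hW0 : ∀ g : G, ∀ v ∈ W.map e.symm.toLinearMap, ρ g v ∈ W.map e.symm.toLinearMap := by
          rintro g v ⟨u, hu, rfl⟩
          exact ⟨_, hW g u hu, by simp⟩
        rcases hsimp _ hW0 with h | h
        · left
          rw [eq_bot_iff]
          intro v hv
          have : e.symm v ∈ Submodule.map e.symm.toLinearMap W := ⟨v, hv, rfl⟩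
          rw [h] at this
          simp only [Submodule.mem_bot] at this ⊢
          have := congrArg e this
          simpa using this
        · right
          rw [eq_top_iff]
          intro v _
          have : e.symm v ∈ Submodule.map e.symm.toLinearMap W := h ▸ Submodule.mem_top
          obtain ⟨u, hu, huv⟩ := this
          have : u = v := by
            have := congrArg e huv
            simpa using this
          exact this ▸ hu
      · refine ⟨fun g => e (f g), fun g h => by simp [hcoc g h], ?_⟩
        rintro ⟨v, hv⟩
        refine hncb ⟨e.symm v, fun g => ?_⟩
        have := hv g
        apply_fun e.symm at this
        simpa using this
      · intro z hz v
        simp [hcen z hz]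
    · push_neg at hsimp
      obtain ⟨W, hWinv, hWbot, hWtop⟩ := hsimp
      have hle : ∀ g : G, W ≤ W.comap (ρ g) := fun g v hv => hWinv g v hv
      -- quotient representation
      let ρQ : Representation (ZMod 2) G (V ⧸ W) :=
        { toFun := fun g => Submodule.mapQ W W (ρ g) (hle g)
          map_one' := by
            apply Submodule.linearMap_qext
            ext v; simp
          map_mul' := fun g h => by
            apply Submodule.linearMap_qext
            ext v; simp }
      have hρQ : ∀ (g : G) (v : V), ρQ g (Submodule.Quotient.mk v) =
          Submodule.Quotient.mk (ρ g v) := fun g v => rfl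
      -- restricted representation
      let ρW : Representation (ZMod 2) G W :=
        { toFun := fun g => (ρ g).restrict (hWinv g)
          map_one' := by ext v; simp [LinearMap.restrict_apply]
          map_mul' := fun g h => by ext v; simp [LinearMap.restrict_apply] }
      have hρW : ∀ (g : G) (v : W), (ρW g v : V) = ρ g v := fun g v => rfl
      have hrkW : finrank (ZMod 2) W < n := hrank ▸ Submodule.finrank_lt hWtop
      have hrkQ : finrank (ZMod 2) (V ⧸ W) < n := by
        have h1 : finrank (ZMod 2) W + finrank (ZMod 2) (V ⧸ W) = n := by
          rw [add_comm, Submodule.finrank_quotient_add_finrank, hrank]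
        have h2 : 0 < finrank (ZMod 2) W := by
          rcases Submodule.exists_mem_ne_zero_of_ne_bot hWbot with ⟨x, hx, hx0⟩
          exact finrank_pos_iff.mpr ⟨⟨⟨x, hx⟩, 0, by simp [Subtype.ext_iff, hx0]⟩⟩
        omega
      by_cases hq : ∃ v : V ⧸ W, ∀ g, (Submodule.Quotient.mk (f g) : V ⧸ W) = ρQ g v - v
      · -- descend into W
        obtain ⟨vq, hvq⟩ := hq
        obtain ⟨v, rfl⟩ := Submodule.Quotient.mk_surjective W vq
        have hmem : ∀ g : G, f g - (ρ g v - v) ∈ W := by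
          intro g
          have h1 := hvq g
          rw [hρQ] at h1
          have h2 : (Submodule.Quotient.mk (f g) : V ⧸ W) =
              Submodule.Quotient.mk (ρ g v - v) := by
            rw [h1, Submodule.Quotient.mk_sub]
          exact (Submodule.Quotient.eq W).mp h2
        let f' : G → W := fun g => ⟨f g - (ρ g v - v), hmem g⟩
        have hcoc' : ∀ g h, f' (g * h) = f' g + ρW g (f' h) := by
          intro g h
          apply Subtype.ext
          show f (g * h) - (ρ (g * h) v - v) = (f g - (ρ g v - v)) + ρ g (f h - (ρ h v - v))
          rw [hcoc g h, map_mul]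
          simp only [map_sub, Module.End.mul_apply]
          abel
        have hncb' : ¬ ∃ w : W, ∀ g, f' g = ρW g w - w := by
          rintro ⟨w, hw⟩
          refine hncb ⟨v + (w : V), fun g => ?_⟩
          have := congrArg (Subtype.val) (hw g)
          simp only [AddSubgroupClass.coe_sub, hρW] at this
          show f g = ρ g (v + w) - (v + w)
          rw [map_add]
          have h2 : f g - (ρ g v - v) = ρ g (w:V) - w := this
          have h3 := sub_eq_iff_eq_add.mp h2
          rw [h3]; abel
        have hcen' : ∀ z ∈ Subgroup.center G, ∀ w : W, ρW z w = w := by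
          intro z hz w
          apply Subtype.ext
          rw [hρW, hcen z hz]
        exact ih _ hrkW W rfl (le_of_lt (lt_of_lt_of_le (hrank ▸ hrkW) hnp)) ρW f' hcoc' hncb' hcen'
      · -- descend into V ⧸ W
        have hcocQ : ∀ g h, (Submodule.Quotient.mk (f (g * h)) : V ⧸ W) =
            Submodule.Quotient.mk (f g) + ρQ g (Submodule.Quotient.mk (f h)) := by
          intro g h
          rw [hρQ, hcoc g h, Submodule.Quotient.mk_add]
        exact ih _ hrkQ (V ⧸ W) rfl (le_of_lt (lt_of_lt_of_le (hrank ▸ hrkQ) hnp)) ρQ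
          (fun g => Submodule.Quotient.mk (f g)) hcocQ hq
          (fun z hz => by
            rintro ⟨v⟩
            show ρQ z (Submodule.Quotient.mk v) = Submodule.Quotient.mk v
            rw [hρQ, hcen z hz])
section Main

theorem statement14 (p : ℕ) (hp : p.Prime) (hodd : Odd p) (hp3 : 3 ≤ p) :
    ∃ (d : ℕ) (ρ : Representation (ZMod 2) (Matrix.SpecialLinearGroup (Fin 2) (ZMod p))
        (Fin d → ZMod 2)),
      1 ≤ d ∧ d ≤ p ∧
      (∀ W : Submodule (ZMod 2) (Fin d → ZMod 2),
        (∀ g : Matrix.SpecialLinearGroup (Fin 2) (ZMod p), ∀ v ∈ W, ρ g v ∈ W) →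
        W = ⊥ ∨ W = ⊤) ∧
      (∃ f : Matrix.SpecialLinearGroup (Fin 2) (ZMod p) → (Fin d → ZMod 2),
        (∀ g h, f (g * h) = f g + ρ g (f h)) ∧
        ¬ ∃ v : Fin d → ZMod 2, ∀ g, f g = ρ g v - v) ∧
      (∀ z ∈ Subgroup.center (Matrix.SpecialLinearGroup (Fin 2) (ZMod p)),
        ∀ v : Fin d → ZMod 2, ρ z v = v) := by
  classical
  haveI : Fact p.Prime := ⟨hp⟩
  set G' := Matrix.SpecialLinearGroup (Fin 2) (ZMod p) with hG'
  set Xp := Projectivization (ZMod p) (Fin 2 → ZMod p) with hXp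
  -- the permutation representation on functions X → ZMod 2
  let ρM : Representation (ZMod 2) G' (Xp → ZMod 2) :=
    { toFun := fun g => LinearMap.funLeft (ZMod 2) (ZMod 2) (fun x => g⁻¹ • x)
      map_one' := by
        ext v x
        simp [LinearMap.funLeft_apply]
      map_mul' := fun g h => by
        ext v x
        simp [LinearMap.funLeft_apply, mul_smul] }
  have hρM : ∀ (g : G') (v : Xp → ZMod 2) (x : Xp), ρM g v x = v (g⁻¹ • x) := fun g v x => rfl
  -- the sum functional and its kernel S
  let σ : (Xp → ZMod 2) →ₗ[ZMod 2] ZMod 2 := ∑ x : Xp, LinearMap.proj x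
  have hσ : ∀ v : Xp → ZMod 2, σ v = ∑ x : Xp, v x := by
    intro v
    simp [σ, LinearMap.sum_apply, LinearMap.proj_apply]
  have hsum_inv : ∀ (g : G') (v : Xp → ZMod 2), ∑ x : Xp, v (g⁻¹ • x) = ∑ x : Xp, v x := by
    intro g v
    exact Equiv.sum_comp (MulAction.toPerm (g⁻¹ : G')) v
  set S := LinearMap.ker σ with hS
  have hmemS : ∀ v : Xp → ZMod 2, v ∈ S ↔ ∑ x : Xp, v x = 0 := by
    intro v
    rw [hS, LinearMap.mem_ker, hσ]
  have hSinv : ∀ g : G', ∀ v ∈ S, ρM g v ∈ S := by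
    intro g v hv
    rw [hmemS] at hv ⊢
    calc ∑ x : Xp, (ρM g v) x = ∑ x : Xp, v (g⁻¹ • x) := rfl
    _ = ∑ x : Xp, v x := hsum_inv g v
    _ = 0 := hv
  -- restricted representation on S
  let ρS : Representation (ZMod 2) G' S :=
    { toFun := fun g => (ρM g).restrict (hSinv g)
      map_one' := by ext v; simp [LinearMap.restrict_apply]
      map_mul' := fun g h => by ext v; simp [LinearMap.restrict_apply] }
  have hρS : ∀ (g : G') (v : S), ((ρS g v : S) : Xp → ZMod 2) = ρM g (v : Xp → ZMod 2) :=
    fun g v => rfl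
  -- base point and cocycle
  set x₀ : Xp := Projectivization.mk (ZMod p) ![1, 0] (e0_ne_zero p) with hx₀
  set e₀ : Xp → ZMod 2 := Pi.single x₀ 1 with he₀
  have hsum_e₀ : ∑ x : Xp, e₀ x = 1 := by
    rw [he₀, Finset.sum_pi_single' x₀ (1 : ZMod 2) Finset.univ]
    simp
  have hge₀ : ∀ g : G', ∑ x : Xp, (ρM g e₀) x = 1 := by
    intro g
    calc ∑ x : Xp, (ρM g e₀) x = ∑ x : Xp, e₀ (g⁻¹ • x) := rfl
    _ = ∑ x : Xp, e₀ x := hsum_inv g e₀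
    _ = 1 := hsum_e₀
  have hfmem : ∀ g : G', ρM g e₀ - e₀ ∈ S := by
    intro g
    rw [hmemS]
    simp only [Pi.sub_apply]
    rw [Finset.sum_sub_distrib]
    rw [hge₀ g, hsum_e₀]
    simp
  let fS : G' → S := fun g => ⟨ρM g e₀ - e₀, hfmem g⟩
  have hcoc : ∀ g h : G', fS (g * h) = fS g + ρS g (fS h) := by
    intro g h
    apply Subtype.ext
    show ρM (g * h) e₀ - e₀ = (ρM g e₀ - e₀) + ρM g (ρM h e₀ - e₀)
    rw [map_mul]
    simp only [map_sub, Module.End.mul_apply]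
    abel
  have two_dvd : (2 : ℕ) ∣ p + 1 := by
    obtain ⟨k, hk⟩ := hodd
    exact ⟨k + 1, by omega⟩
  have hncb : ¬ ∃ v : S, ∀ g : G', fS g = ρS g v - v := by
    rintro ⟨v, hv⟩
    set w : Xp → ZMod 2 := e₀ - (v : Xp → ZMod 2) with hw
    have hfix : ∀ g : G', ρM g w = w := by
      intro g
      have h1 := congrArg (Subtype.val) (hv g)
      simp only [AddSubgroupClass.coe_sub, hρS] at h1
      have h2 : ρM g e₀ - e₀ = ρM g (v : Xp → ZMod 2) - (v : Xp → ZMod 2) := h1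
      rw [hw, map_sub]
      rw [sub_eq_sub_iff_sub_eq_sub] at h2
      exact h2
    have hconst : ∀ x : Xp, w x = w x₀ := by
      intro x
      obtain ⟨g, hg⟩ := transitive_smul p x
      have h1 := congrFun (hfix g) x
      rw [hρM] at h1
      rw [← h1, ← hg]
      rw [inv_smul_smul]
    have hsw1 : ∑ x : Xp, w x = 1 := by
      rw [hw]
      simp only [Pi.sub_apply]
      rw [Finset.sum_sub_distrib, hsum_e₀]
      have : ∑ x : Xp, (v : Xp → ZMod 2) x = 0 := (hmemS _).mp v.2
      rw [this]
      simp
    have hsw0 : ∑ x : Xp, w x = 0 := by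
      calc ∑ x : Xp, w x = ∑ _x : Xp, w x₀ := Finset.sum_congr rfl (fun x _ => hconst x)
      _ = (Fintype.card Xp) • w x₀ := by rw [Finset.sum_const, Finset.card_univ]
      _ = ((Fintype.card Xp : ℕ) : ZMod 2) * w x₀ := by rw [nsmul_eq_mul]
      _ = 0 := by
          rw [cardX p]
          have : ((p + 1 : ℕ) : ZMod 2) = 0 := (ZMod.natCast_eq_zero_iff _ _).mpr two_dvd
          rw [this, zero_mul]
    rw [hsw1] at hsw0
    exact one_ne_zero hsw0
  have hcen : ∀ z ∈ Subgroup.center G', ∀ v : S, ρS z v = v := by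
    intro z hz v
    apply Subtype.ext
    rw [hρS]
    funext x
    rw [hρM]
    rw [center_smul p z⁻¹ ((Subgroup.center G').inv_mem hz) x]
  -- dimension bound
  have hrankM : Module.finrank (ZMod 2) (Xp → ZMod 2) = p + 1 := by
    rw [Module.finrank_pi (ZMod 2)]
    exact cardX p
  have hSne : S ≠ ⊤ := by
    intro h
    have : e₀ ∈ S := h ▸ Submodule.mem_top
    rw [hmemS, hsum_e₀] at this
    exact one_ne_zero this
  have hrankS : Module.finrank (ZMod 2) S ≤ p := by
    have := Submodule.finrank_lt hSne
    omega
  exact aux_main p (Module.finrank (ZMod 2) S) S rfl hrankS ρS fS hcoc hncb hcen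

end Main
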